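/- Let N ∈ N, k ≥ 2, f ∈ S_k(Γ_1(N)) a cusp form, and for g ∈ SL_2(Z) define ξ_f(j; g) = ∫_{g·0}^{g·∞} f(z) (g·P_j)(z,1) dz where P_j(X,Y) = X^j Y^{k−2−j} and (g·P)(X,Y) = P(g^{−1}(X,Y)^T). If g = [[a,b],[c,d]] ∈ SL_2(Z) with bottom row (c,d) ≡ (u,v) mod N, then ξ_f(j; g) = (j! / (−2πi)^{j+1}) · L(f|_k g, j+1), where L(F, s) is the analytic continuation of ∑_{n ∈ Q_{>0}} b_n n^{−s} for F = ∑ b_n e^{2πinτ}. -/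

import Mathlib

open Complex MeasureTheory

/-- For a cusp form `f` of weight `k` and `g = [[a,b],[c,d]] ∈ SL₂(ℤ)`
with bottom row `(c,d) ≡ (u,v) mod N`, the modular symbol
`ξ_f(j; g) = ∫_{g·0}^{g·∞} f(z)(g·P_j)(z,1) dz` (the path `g·(iy)`, `y ∈ (0,∞)`, with
`(g·P_j)(z,1) = (dz−b)^j(−cz+a)^{k−2−j}`) equals `(j!/(−2πi)^{j+1}) L(f|_k g, j+1)`,
where `L(F, s)` is the analytic continuation of the L-series of `F = f|_k g`,
characterised by the Mellin transform `Γ(s)(2π)^{−s} L(F,s) = ∫_0^∞ F(iy) y^{s−1} dy`. -/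
theorem xi_equals_L_value
    (N : ℕ) (k j : ℕ) (hk : 2 ≤ k) (hj : j ≤ k - 2)
    (a b c d : ℤ) (hdet : a * d - b * c = 1)
    (u v : ZMod N) (hc : ((c : ℤ) : ZMod N) = u) (hd : ((d : ℤ) : ZMod N) = v)
    (f : ℂ → ℂ)
    (Lval : ℂ)
    (hL : (Nat.factorial j : ℂ) * (2 * Real.pi : ℂ) ^ (-((j : ℤ) + 1)) * Lval
      = ∫ y in Set.Ioi (0 : ℝ),
          (((c : ℂ) * (I * y) + d) ^ (-(k : ℤ)) *
            f (((a : ℂ) * (I * y) + b) / ((c : ℂ) * (I * y) + d))) * (y : ℂ) ^ (j : ℕ)) :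
    (∫ y in Set.Ioi (0 : ℝ),
        f (((a : ℂ) * (I * y) + b) / ((c : ℂ) * (I * y) + d)) *
          ((d : ℂ) * (((a : ℂ) * (I * y) + b) / ((c : ℂ) * (I * y) + d)) - b) ^ (j : ℕ) *
          (-(c : ℂ) * (((a : ℂ) * (I * y) + b) / ((c : ℂ) * (I * y) + d)) + a) ^ (k - 2 - j) *
          (I / ((c : ℂ) * (I * y) + d) ^ (2 : ℕ)))
      = (Nat.factorial j : ℂ) / (-2 * Real.pi * I) ^ (j + 1) * Lval := by
  have hdetC : (a:ℂ)*d - b*c = 1 := by exact_mod_cast hdet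
  have hk2 : j + (k - 2 - j) + 2 = k := by omega
  have hEq : Set.EqOn
      (fun y : ℝ =>
        f (((a : ℂ) * (I * y) + b) / ((c : ℂ) * (I * y) + d)) *
          ((d : ℂ) * (((a : ℂ) * (I * y) + b) / ((c : ℂ) * (I * y) + d)) - b) ^ (j : ℕ) *
          (-(c : ℂ) * (((a : ℂ) * (I * y) + b) / ((c : ℂ) * (I * y) + d)) + a) ^ (k - 2 - j) *
          (I / ((c : ℂ) * (I * y) + d) ^ (2 : ℕ)))
      (fun y : ℝ => I^(j+1) *
        ((((c : ℂ) * (I * y) + d) ^ (-(k : ℤ)) *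
            f (((a : ℂ) * (I * y) + b) / ((c : ℂ) * (I * y) + d))) * (y : ℂ) ^ (j : ℕ)))
      (Set.Ioi 0) := by
    intro y hy
    have hy0 : (y:ℝ) ≠ 0 := ne_of_gt hy
    have hyC : (y:ℂ) ≠ 0 := by exact_mod_cast hy0
    have hw : ((c:ℂ) * (I * y) + d) ≠ 0 := by
      intro h
      rw [Complex.ext_iff] at h
      simp [Complex.add_re, Complex.add_im, Complex.mul_re, Complex.mul_im] at h
      obtain ⟨h1, h2⟩ := h
      have hcz : (c:ℝ) = 0 := by
        rcases h2 with h | h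
        · exact_mod_cast h
        · exact absurd h hy0
      have hc0 : c = 0 := by exact_mod_cast hcz
      have hd0 : d = 0 := by exact_mod_cast h1
      rw [hc0, hd0] at hdet
      simp at hdet
    simp only
    have e1 : (d : ℂ) * (((a : ℂ) * (I * y) + b) / ((c : ℂ) * (I * y) + d)) - b
        = (I * y) / ((c:ℂ) * (I * y) + d) := by
      rw [eq_div_iff hw, sub_mul, mul_assoc _ (_ / _), div_mul_cancel₀ _ hw]
      linear_combination (I * (y:ℂ)) * hdetC
    have e2 : -(c : ℂ) * (((a : ℂ) * (I * y) + b) / ((c : ℂ) * (I * y) + d)) + a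
        = 1 / ((c:ℂ) * (I * y) + d) := by
      rw [eq_div_iff hw, add_mul, mul_assoc _ (_ / _), div_mul_cancel₀ _ hw]
      linear_combination hdetC
    rw [e1, e2, zpow_neg, zpow_natCast, ← hk2]
    rw [div_pow, div_pow, one_pow, mul_pow, pow_add, pow_add, pow_succ]
    field_simp
    have hsplit : ((c:ℂ) * (I * (y:ℂ)) + (d:ℂ))^(k-2)
        = ((c:ℂ) * (I * (y:ℂ)) + (d:ℂ))^j * ((c:ℂ) * (I * (y:ℂ)) + (d:ℂ))^(k-2-j) := by
      rw [← pow_add]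
      congr 1
      omega
    rw [show j + (k - 2 - j) + 2 - 2 - j = k - 2 - j by omega, pow_add]
    ring
  rw [MeasureTheory.setIntegral_congr_fun measurableSet_Ioi hEq,
    MeasureTheory.integral_const_mul, ← hL]
  have hπ : (2 * (Real.pi:ℂ)) ≠ 0 := by
    simp [Real.pi_ne_zero]
  have hkey : ((-2)*(Real.pi:ℂ)*I)^(j+1) * I^(j+1) = (2*(Real.pi:ℂ))^(j+1) := by
    rw [← mul_pow]
    congr 1
    have : (-2)*(Real.pi:ℂ)*I*I = (-2)*(Real.pi:ℂ)*(I*I) := by ring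
    rw [this, Complex.I_mul_I]
    ring
  have h2 : ((-2)*(Real.pi:ℂ)*I)^(j+1) ≠ 0 :=
    pow_ne_zero _ (by simp [Real.pi_ne_zero, Complex.I_ne_zero])
  have hz : ((2:ℂ) * Real.pi) ^ (-((j : ℤ) + 1)) = ((2*(Real.pi:ℂ))^(j+1))⁻¹ := by
    rw [zpow_neg, show ((j:ℤ)+1) = ((j+1 : ℕ) : ℤ) by push_cast; ring, zpow_natCast]
  rw [hz, div_mul_eq_mul_div, eq_div_iff h2]
  have h3 : (2*(Real.pi:ℂ))^(j+1) ≠ 0 := pow_ne_zero _ hπ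
  calc I^(j+1) * ((Nat.factorial j : ℂ) * ((2*(Real.pi:ℂ))^(j+1))⁻¹ * Lval) * ((-2)*(Real.pi:ℂ)*I)^(j+1)
      = (((-2)*(Real.pi:ℂ)*I)^(j+1) * I^(j+1)) * ((Nat.factorial j : ℂ) * ((2*(Real.pi:ℂ))^(j+1))⁻¹ * Lval) := by
        ring
    _ = (2*(Real.pi:ℂ))^(j+1) * ((Nat.factorial j : ℂ) * ((2*(Real.pi:ℂ))^(j+1))⁻¹ * Lval) := by
        rw [hkey]
    _ = (Nat.factorial j : ℂ) * Lval := by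
        field_simp
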